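/- Conditional distribution of the constant composition distribution (Lemma 6): Let X be a finite alphabet, n ∈ ℕ, P an n-type on X, 1 ≤ i ≤ n−1, and let X^n = (X_1,…,X_n) be uniformly distributed on T_n(P). A prefix x^i = (x_1,…,x_i) ∈ X^i has positive probability under the law of (X_1,…,X_i) if and only if the function Q*(a) = (n·P(a) − i·P̂_{x^i}(a))/(n−i) is a pmf on X with (n−i)·Q*(a) ∈ ℕ for all a ∈ X (i.e., Q* is an (n−i)-type), where P̂_{x^i} is the empirical distribution of x^i. Moreover, for every such prefix x^i and every a ∈ X, P{X_{i+1} = a | (X_1,…,X_i) = x^i} = Q*(a). -/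

import Mathlib

open scoped BigOperators Classical

noncomputable section

/-- A probability mass function on a finite alphabet. -/
def IsPMF {X : Type*} [Fintype X] (p : X → ℝ) : Prop :=
  (∀ a, 0 ≤ p a) ∧ ∑ a, p a = 1

/-- A (discrete memoryless) channel from `X` to `Y`: every row is a pmf. -/
def IsChannel {X Y : Type*} [Fintype X] [Fintype Y] (W : X → Y → ℝ) : Prop :=
  ∀ x, IsPMF (W x)

/-- Empirical distribution (type) of a sequence `x : Fin n → X`. -/
def empDist {X : Type*} [Fintype X] {n : ℕ} (x : Fin n → X) (a : X) : ℝ :=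
  ((Finset.univ.filter fun t => x t = a).card : ℝ) / n

/-- `P` is an `n`-type on `X`: a pmf all of whose masses are multiples of `1/n`. -/
def IsNType {X : Type*} [Fintype X] (n : ℕ) (P : X → ℝ) : Prop :=
  IsPMF P ∧ ∀ a, ∃ k : ℕ, (n : ℝ) * P a = k

/-- The type class `T_n(P)`: all sequences with empirical distribution `P`. -/
def typeClass {X : Type*} [Fintype X] (n : ℕ) (P : X → ℝ) : Finset (Fin n → X) :=
  Finset.univ.filter fun x => empDist x = P

/-- Shannon entropy (natural logarithm). -/
def shEntropy {X : Type*} [Fintype X] (p : X → ℝ) : ℝ :=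
  ∑ a, Real.negMulLog (p a)

/-- Kullback–Leibler divergence (real-valued, with the usual `log` conventions). -/
def dKL {X : Type*} [Fintype X] (q p : X → ℝ) : ℝ :=
  ∑ a, q a * Real.log (q a / p a)

/-- Conditional KL divergence `D(V‖W|P)`. -/
def condDKL {X Y : Type*} [Fintype X] [Fintype Y] (V W : X → Y → ℝ) (P : X → ℝ) : ℝ :=
  ∑ x, P x * dKL (V x) (W x)

def margFst {X Y : Type*} [Fintype X] [Fintype Y] (Q : X × Y → ℝ) (x : X) : ℝ :=
  ∑ y, Q (x, y)

def margSnd {X Y : Type*} [Fintype X] [Fintype Y] (Q : X × Y → ℝ) (y : Y) : ℝ :=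
  ∑ x, Q (x, y)

/-- Mutual information of a joint pmf (natural logarithm). -/
def mutualInfo {X Y : Type*} [Fintype X] [Fintype Y] (Q : X × Y → ℝ) : ℝ :=
  ∑ x, ∑ y, Q (x, y) * Real.log (Q (x, y) / (margFst Q x * margSnd Q y))

/-- Mutual information `I(P, V)` of the joint pmf `P(x)·V(y|x)`. -/
def miPV {X Y : Type*} [Fintype X] [Fintype Y] (P : X → ℝ) (V : X → Y → ℝ) : ℝ :=
  mutualInfo fun p => P p.1 * V p.1 p.2

/-- Positive part `|a|⁺ = max (a, 0)`. -/
def plusPart (a : ℝ) : ℝ := max a 0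

def margXY {X Y U : Type*} [Fintype X] [Fintype Y] [Fintype U] (Q : X × Y × U → ℝ) :
    X × Y → ℝ := fun p => ∑ u, Q (p.1, p.2, u)

def margYU {X Y U : Type*} [Fintype X] [Fintype Y] [Fintype U] (Q : X × Y × U → ℝ) :
    Y × U → ℝ := fun p => ∑ x, Q (x, p.1, p.2)

def margXU {X Y U : Type*} [Fintype X] [Fintype Y] [Fintype U] (Q : X × Y × U → ℝ) :
    X × U → ℝ := fun p => ∑ y, Q (p.1, y, p.2)

def margX3 {X Y U : Type*} [Fintype X] [Fintype Y] [Fintype U] (Q : X × Y × U → ℝ)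
    (x : X) : ℝ := ∑ y, ∑ u, Q (x, y, u)

def margY3 {X Y U : Type*} [Fintype X] [Fintype Y] [Fintype U] (Q : X × Y × U → ℝ)
    (y : Y) : ℝ := ∑ x, ∑ u, Q (x, y, u)

/-- Conditional mutual information `I_Q(X;U|Y)` of a joint pmf `Q` on `X × Y × U`. -/
def condMI3 {X Y U : Type*} [Fintype X] [Fintype Y] [Fintype U] (Q : X × Y × U → ℝ) : ℝ :=
  ∑ x, ∑ y, ∑ u, Q (x, y, u) *
    Real.log (Q (x, y, u) * margY3 Q y / (margXY Q (x, y) * margYU Q (y, u)))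

/-- `D(Q_{Y|X} ‖ W | P)` written via the joint pmf `Q_{XY}` (whose `X`-marginal is `P`). -/
def condDKLJoint {X Y : Type*} [Fintype X] [Fintype Y] (QXY : X × Y → ℝ)
    (W : X → Y → ℝ) (P : X → ℝ) : ℝ :=
  ∑ x, ∑ y, QXY (x, y) * Real.log (QXY (x, y) / (P x * W x y))

/-- Number of messages `M_n = ⌈exp (n R)⌉`. -/
def Mn (R : ℝ) (n : ℕ) : ℕ := ⌈Real.exp (n * R)⌉₊

/-- All codebooks of `M` codewords, each of constant composition `P`. -/
def ccCodebooks {X : Type*} [Fintype X] (n M : ℕ) (P : X → ℝ) :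
    Finset (Fin M → Fin n → X) :=
  Finset.univ.filter fun C => ∀ m, C m ∈ typeClass n P

/-- Ensemble-average decoding error probability of an `(n,R,B)`-code for the IB channel:
the expectation, over a codebook drawn uniformly from the constant composition ensemble of
type `P`, of the average over messages `m` of the probability (under the memoryless channel
`W`) that the decoder output differs from `m` when codeword `C m` is sent. -/
def avgError {X Y L : Type*} [Fintype X] [Fintype Y] (W : X → Y → ℝ) (n M : ℕ)
    (P : X → ℝ) (φ : (Fin n → Y) → L) (ψ : L → (Fin M → Fin n → X) → Fin M) : ℝ :=
  (∑ C ∈ ccCodebooks n M P, (M : ℝ)⁻¹ * ∑ m : Fin M, ∑ y : Fin n → Y,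
      if ψ (φ y) C = m then 0 else ∏ t, W (C m t) (y t)) /
    ((ccCodebooks n M P).card : ℝ)


/-- **Lemma 6** (conditional distribution of the constant composition distribution): let
`X^n` be uniform on `T_n(P)` and `1 ≤ i ≤ n−1`. A prefix `x^i` has positive probability iff
`Q*(a) = (n·P(a) − i·P̂_{x^i}(a))/(n−i)` is an `(n−i)`-type, and in that case the conditional
law of the next coordinate given the prefix is `Q*`: the number of extensions with next
symbol `a` equals `Q*(a)` times the number of extensions. -/
lemma count_get {X : Type*} (l : List X) (a : X) :
    (Finset.univ.filter fun j : Fin l.length => l.get j = a).card = l.count a := by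
  classical
  conv_rhs => rw [← List.map_get_finRange l]
  rw [List.count_eq_countP, List.countP_map]
  rw [Fin.univ_def, Finset.filter]
  simp only [Finset.card, Multiset.filter_coe, Multiset.coe_card,
    List.countP_eq_length_filter]
  apply congrArg List.length
  apply List.filter_congr
  intro j _
  simp only [Function.comp]
  rw [Bool.eq_iff_iff]
  simp

lemma exists_seq_counts {X : Type*} [Fintype X] (N : ℕ) (m : X → ℕ)
    (hm : ∑ a, m a = N) : ∃ y : Fin N → X, ∀ a,
      (Finset.univ.filter fun j => y j = a).card = m a := by
  classical
  set M : Multiset X := ∑ a, (m a) • {a} with hM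
  have hcard : Multiset.card M = N := by simp [hM, hm]
  have hcount : ∀ a, M.count a = m a := by
    intro a
    simp [hM, Multiset.count_sum', Multiset.count_singleton]
  obtain ⟨l, hl⟩ : ∃ l : List X, (l : Multiset X) = M := ⟨M.toList, M.coe_toList⟩
  have hlen : l.length = N := by rw [← hcard, ← hl]; simp
  refine ⟨fun j => l.get (Fin.cast hlen.symm j), fun a => ?_⟩
  rw [← hcount a, ← hl]
  simp only [Multiset.coe_count]
  rw [← count_get l a]
  exact Finset.card_equiv (Fin.castOrderIso hlen.symm).toEquiv (by simp [Fin.cast])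

lemma empDist_comp_perm {X : Type*} [Fintype X] {n : ℕ} (x : Fin n → X)
    (σ : Equiv.Perm (Fin n)) : empDist (x ∘ σ) = empDist x := by
  classical
  funext a
  unfold empDist
  congr 2
  exact Finset.card_equiv σ (by simp)

theorem constant_composition_conditional
    {X : Type*} [Fintype X] (n i : ℕ) (hi1 : 1 ≤ i) (hin : i < n)
    (P : X → ℝ) (hP : IsNType n P) (xp : Fin i → X) :
    ((0 < ((typeClass n P).filter fun x =>
        ∀ t : Fin i, x (Fin.castLE hin.le t) = xp t).card) ↔
      IsNType (n - i) fun a => ((n : ℝ) * P a - (i : ℝ) * empDist xp a) / ((n - i : ℕ) : ℝ)) ∧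
    ∀ a : X,
      ((((typeClass n P).filter fun x =>
          (∀ t : Fin i, x (Fin.castLE hin.le t) = xp t) ∧ x ⟨i, hin⟩ = a).card : ℝ)) =
        (((n : ℝ) * P a - (i : ℝ) * empDist xp a) / ((n - i : ℕ) : ℝ)) *
          (((typeClass n P).filter fun x =>
            ∀ t : Fin i, x (Fin.castLE hin.le t) = xp t).card : ℝ) := by
  classical
  have hn0 : (0:ℝ) < n := by
    have : 0 < n := lt_of_le_of_lt (Nat.zero_le i) hin
    exact_mod_cast this
  have hi0 : (0:ℝ) < i := by exact_mod_cast hi1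
  have hnic : ((n - i : ℕ) : ℝ) = (n : ℝ) - i := by
    rw [Nat.cast_sub hin.le]
  have hni0 : (0:ℝ) < ((n - i : ℕ) : ℝ) := by
    rw [hnic]; have : (i:ℝ) < n := by exact_mod_cast hin
    linarith
  set c : X → ℕ := fun a => (Finset.univ.filter fun t : Fin i => xp t = a).card with hcdef
  have hc : ∀ a, (i:ℝ) * empDist xp a = c a := by
    intro a
    unfold empDist
    field_simp
    rfl
  -- count within a sequence of the type class
  have hkx : ∀ x ∈ typeClass n P, ∀ a,
      (((Finset.univ.filter fun t : Fin n => x t = a).card : ℝ)) = n * P a := by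
    intro x hx a
    have hx2 : empDist x = P := (Finset.mem_filter.mp hx).2
    rw [← congrFun hx2 a]
    unfold empDist
    field_simp
  set S := (typeClass n P).filter
      (fun x => ∀ t : Fin i, x (Fin.castLE hin.le t) = xp t) with hSdef
  set T : X → Finset (Fin n → X) := fun a => (typeClass n P).filter
      (fun x => (∀ t : Fin i, x (Fin.castLE hin.le t) = xp t) ∧ x ⟨i, hin⟩ = a) with hTdef
  have hT : ∀ a, T a = S.filter (fun x => x ⟨i, hin⟩ = a) := by
    intro a
    rw [hTdef, hSdef, Finset.filter_filter]
  -- prefix counts: for x with the prefix property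
  have hprefcount : ∀ x : Fin n → X, (∀ t : Fin i, x (Fin.castLE hin.le t) = xp t) → ∀ a,
      (Finset.univ.filter fun t : Fin n => (t:ℕ) < i ∧ x t = a).card = c a := by
    intro x hpre a
    rw [hcdef]
    apply Finset.card_bij (fun (t : Fin n) (ht : t ∈ _) =>
      (⟨(t:ℕ), (Finset.mem_filter.mp ht).2.1⟩ : Fin i))
    · intro t ht
      simp only [Finset.mem_filter, Finset.mem_univ, true_and] at ht ⊢
      rw [← hpre ⟨(t:ℕ), ht.1⟩]
      have : Fin.castLE hin.le (⟨(t:ℕ), ht.1⟩ : Fin i) = t := by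
        apply Fin.ext; rfl
      rw [this]
      exact ht.2
    · intro t1 h1 t2 h2 h
      apply Fin.ext
      simpa using congrArg Fin.val h
    · intro b hb
      simp only [Finset.mem_filter, Finset.mem_univ, true_and] at hb
      refine ⟨Fin.castLE hin.le b, ?_, ?_⟩
      · simp only [Finset.mem_filter, Finset.mem_univ, true_and]
        refine ⟨b.2, ?_⟩
        rw [hpre b]; exact hb
      · apply Fin.ext; rfl
  -- the swap symmetry
  have hswap : ∀ a : X, ∀ t : Fin n, i ≤ (t:ℕ) →
      (S.filter fun x => x t = a).card = (T a).card := by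
    intro a t ht
    rw [hT a]
    set σ : Equiv.Perm (Fin n) := Equiv.swap t ⟨i, hin⟩ with hσ
    have hσfix : ∀ t' : Fin i, σ (Fin.castLE hin.le t') = Fin.castLE hin.le t' := by
      intro t'
      apply Equiv.swap_apply_of_ne_of_ne
      · intro h
        have : (t':ℕ) = (t:ℕ) := congrArg Fin.val h
        omega
      · intro h
        have : (t':ℕ) = i := congrArg Fin.val h
        omega
    have hmemS : ∀ x, x ∈ S → (x ∘ σ) ∈ S := by
      intro x hx
      rw [hSdef, Finset.mem_filter] at hx ⊢
      obtain ⟨hx1, hx2⟩ := hx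
      constructor
      · rw [typeClass, Finset.mem_filter] at hx1 ⊢
        exact ⟨Finset.mem_univ _, by rw [empDist_comp_perm]; exact hx1.2⟩
      · intro t'
        show x (σ (Fin.castLE hin.le t')) = xp t'
        rw [hσfix t']
        exact hx2 t'
    have hswapinv : ∀ x : Fin n → X, (x ∘ σ) ∘ σ = x := by
      intro x
      funext s
      show x (σ (σ s)) = x s
      rw [hσ, Equiv.swap_apply_self]
    apply Finset.card_nbij' (fun x => x ∘ σ) (fun x => x ∘ σ)
    · intro x hx
      rw [Finset.mem_coe, Finset.mem_filter] at hx ⊢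
      refine ⟨hmemS x hx.1, ?_⟩
      show x (σ ⟨i, hin⟩) = a
      rw [hσ, Equiv.swap_apply_right]
      exact hx.2
    · intro x hx
      rw [Finset.mem_coe, Finset.mem_filter] at hx ⊢
      refine ⟨hmemS x hx.1, ?_⟩
      show x (σ t) = a
      rw [hσ, Equiv.swap_apply_left]
      exact hx.2
    · intro x _; exact hswapinv x
    · intro x _; exact hswapinv x
  -- the set of suffix positions
  set U : Finset (Fin n) := Finset.univ.filter (fun t => i ≤ (t:ℕ)) with hUdef
  have hUcard : U.card = n - i := by
    have h1 : (Finset.univ.filter (fun t : Fin n => ¬ i ≤ (t:ℕ))).card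
        = (Finset.univ : Finset (Fin i)).card := by
      apply Finset.card_bij (fun (t : Fin n) (ht : t ∈ _) =>
        (⟨(t:ℕ), by
          simp only [Finset.mem_filter, Finset.mem_univ, true_and, not_le] at ht
          exact ht⟩ : Fin i))
      · intro t ht; exact Finset.mem_univ _
      · intro t1 h1 t2 h2 h
        apply Fin.ext
        simpa using congrArg Fin.val h
      · intro b _
        refine ⟨Fin.castLE hin.le b, ?_, ?_⟩
        · simp only [Finset.mem_filter, Finset.mem_univ, true_and, not_le]
          exact b.2
        · apply Fin.ext; rfl
    rw [Finset.card_univ, Fintype.card_fin] at h1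
    have h2 := Finset.card_filter_add_card_filter_not
      (s := (Finset.univ : Finset (Fin n))) (p := fun t : Fin n => i ≤ (t:ℕ))
    rw [Finset.card_univ, Fintype.card_fin] at h2
    rw [hUdef]
    omega
  -- suffix count for a member of S
  have hsuffcount : ∀ x ∈ S, ∀ a,
      ((U.filter fun t => x t = a).card : ℝ) = n * P a - c a := by
    intro x hx a
    rw [Finset.mem_filter] at hx
    have hsplit := Finset.card_filter_add_card_filter_not
      (s := Finset.univ.filter fun t : Fin n => x t = a) (p := fun t : Fin n => (t:ℕ) < i)
    rw [Finset.filter_filter, Finset.filter_filter] at hsplit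
    have e1 : (Finset.univ.filter fun t : Fin n => x t = a ∧ (t:ℕ) < i)
        = Finset.univ.filter fun t : Fin n => (t:ℕ) < i ∧ x t = a := by
      apply Finset.filter_congr; intro t _; constructor <;> exact fun h => ⟨h.2, h.1⟩
    have e2 : (Finset.univ.filter fun t : Fin n => x t = a ∧ ¬ (t:ℕ) < i)
        = U.filter fun t => x t = a := by
      rw [hUdef, Finset.filter_filter]
      apply Finset.filter_congr; intro t _
      constructor
      · exact fun h => ⟨Nat.le_of_not_lt h.2, h.1⟩
      · exact fun h => ⟨h.2, Nat.not_lt_of_le h.1⟩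
    rw [e1, e2, hprefcount x hx.2 a] at hsplit
    have hk := hkx x hx.1 a
    have : ((c a + (U.filter fun t => x t = a).card : ℕ) : ℝ)
        = ((Finset.univ.filter fun t : Fin n => x t = a).card : ℝ) := by
      exact_mod_cast congrArg Nat.cast hsplit
    push_cast at this
    linarith
  -- key identity in ℕ→ℝ by double counting
  have hkey : ∀ a, ((n - i : ℕ) : ℝ) * ((T a).card : ℝ)
      = ((n:ℝ) * P a - c a) * (S.card : ℝ) := by
    intro a
    have h1 : ∑ t ∈ U, ((S.filter fun x => x t = a).card : ℝ)
        = ((n - i : ℕ) : ℝ) * ((T a).card : ℝ) := by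
      rw [Finset.sum_congr rfl (fun t ht => by
        rw [hswap a t (by rw [hUdef, Finset.mem_filter] at ht; exact ht.2)])]
      rw [Finset.sum_const, hUcard, nsmul_eq_mul]
    have h2 : ∑ t ∈ U, ((S.filter fun x => x t = a).card : ℝ)
        = ∑ x ∈ S, ((U.filter fun t => x t = a).card : ℝ) := by
      simp only [Finset.card_filter]
      push_cast
      rw [Finset.sum_comm]
    rw [← h1, h2]
    rw [Finset.sum_congr rfl (fun x hx => hsuffcount x hx a)]
    rw [Finset.sum_const, nsmul_eq_mul]
    ring
  have hmain2 : ∀ a : X, ((T a).card : ℝ)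
      = (((n : ℝ) * P a - (i : ℝ) * empDist xp a) / ((n - i : ℕ) : ℝ)) * (S.card : ℝ) := by
    intro a
    rw [hc a]
    rw [div_mul_eq_mul_div, eq_div_iff hni0.ne']
    rw [mul_comm (((T a).card : ℝ)) _, hkey a]
  refine ⟨?_, hmain2⟩
  constructor
  · -- positivity implies type
    intro hpos
    obtain ⟨x, hx⟩ := Finset.card_pos.mp hpos
    have hsum_c : ∑ a, (c a : ℝ) = i := by
      have h := Finset.card_eq_sum_card_fiberwise
        (s := (Finset.univ : Finset (Fin i))) (t := (Finset.univ : Finset X))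
        (f := xp) (fun t _ => Finset.mem_univ (xp t))
      rw [Finset.card_univ, Fintype.card_fin] at h
      have : ∑ a, c a = i := h.symm
      exact_mod_cast congrArg Nat.cast this
    refine ⟨⟨fun a => ?_, ?_⟩, fun a => ?_⟩
    · -- nonneg
      apply div_nonneg _ hni0.le
      rw [hc a, ← hsuffcount x hx a]
      positivity
    · -- sums to one
      rw [← Finset.sum_div]
      rw [div_eq_one_iff_eq hni0.ne']
      rw [Finset.sum_sub_distrib]
      rw [← Finset.mul_sum, hP.1.2]
      have : ∑ a, (i:ℝ) * empDist xp a = i := by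
        rw [Finset.sum_congr rfl (fun a _ => hc a), hsum_c]
      rw [this, hnic]
      ring
    · -- integrality
      refine ⟨(U.filter fun t => x t = a).card, ?_⟩
      show ((n - i : ℕ) : ℝ) * (((n : ℝ) * P a - (i : ℝ) * empDist xp a) / ((n - i : ℕ) : ℝ))
        = ((U.filter fun t => x t = a).card : ℝ)
      rw [hc a, mul_comm, div_mul_cancel₀ _ hni0.ne', hsuffcount x hx a]
  · -- type implies positivity
    intro hQ
    rw [Finset.card_pos]
    -- extract natural values
    have hm : ∀ a, ∃ m : ℕ, (m : ℝ) = n * P a - c a := by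
      intro a
      obtain ⟨m, hm⟩ := hQ.2 a
      refine ⟨m, ?_⟩
      have hm' : ((n - i : ℕ) : ℝ) *
          (((n : ℝ) * P a - (i : ℝ) * empDist xp a) / ((n - i : ℕ) : ℝ)) = m := hm
      rw [hc a, mul_comm, div_mul_cancel₀ _ hni0.ne'] at hm'
      exact hm'.symm
    choose m hm using hm
    have hsum_c : ∑ a, (c a : ℝ) = i := by
      have h := Finset.card_eq_sum_card_fiberwise
        (s := (Finset.univ : Finset (Fin i))) (t := (Finset.univ : Finset X))
        (f := xp) (fun t _ => Finset.mem_univ (xp t))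
      rw [Finset.card_univ, Fintype.card_fin] at h
      have : ∑ a, c a = i := h.symm
      exact_mod_cast congrArg Nat.cast this
    have hsum_m : ∑ a, m a = n - i := by
      have : ((∑ a, m a : ℕ) : ℝ) = ((n - i : ℕ) : ℝ) := by
        push_cast
        rw [Finset.sum_congr rfl (fun a _ => hm a)]
        rw [Finset.sum_sub_distrib, ← Finset.mul_sum, hP.1.2, hsum_c, hnic]
        ring
      exact_mod_cast this
    obtain ⟨y, hy⟩ := exists_seq_counts (n - i) m hsum_m
    set x : Fin n → X := fun t =>
      if h : (t:ℕ) < i then xp ⟨(t:ℕ), h⟩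
      else y ⟨(t:ℕ) - i, by omega⟩ with hxdef
    have hpre : ∀ t : Fin i, x (Fin.castLE hin.le t) = xp t := by
      intro t
      rw [hxdef]
      simp only
      rw [dif_pos (show ((Fin.castLE hin.le t : Fin n) : ℕ) < i from t.2)]
      exact congrArg xp (Fin.ext rfl)
    refine ⟨x, ?_⟩
    rw [hSdef, Finset.mem_filter]
    refine ⟨?_, hpre⟩
    rw [typeClass, Finset.mem_filter]
    refine ⟨Finset.mem_univ _, ?_⟩
    funext a
    unfold empDist
    rw [div_eq_iff hn0.ne']
    -- count of a in x equals n * P a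
    have hsplit := Finset.card_filter_add_card_filter_not
      (s := Finset.univ.filter fun t : Fin n => x t = a) (p := fun t : Fin n => (t:ℕ) < i)
    rw [Finset.filter_filter, Finset.filter_filter] at hsplit
    have e1 : (Finset.univ.filter fun t : Fin n => x t = a ∧ (t:ℕ) < i)
        = Finset.univ.filter fun t : Fin n => (t:ℕ) < i ∧ x t = a := by
      apply Finset.filter_congr; intro t _; constructor <;> exact fun h => ⟨h.2, h.1⟩
    rw [e1, hprefcount x hpre a] at hsplit
    have hsuffix : (Finset.univ.filter fun t : Fin n => x t = a ∧ ¬ (t:ℕ) < i).card = m a := by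
      rw [← hy a]
      apply Finset.card_bij (fun (t : Fin n) (ht : t ∈ _) =>
        (⟨(t:ℕ) - i, by
          have := (Finset.mem_filter.mp ht).2.2
          omega⟩ : Fin (n - i)))
      · intro t ht
        simp only [Finset.mem_filter, Finset.mem_univ, true_and] at ht ⊢
        obtain ⟨hta, hti⟩ := ht
        rw [hxdef] at hta
        simp only at hta
        rw [dif_neg hti] at hta
        exact hta
      · intro t1 h1 t2 h2 h
        have e1 := (Finset.mem_filter.mp h1).2.2
        have e2 := (Finset.mem_filter.mp h2).2.2
        have := congrArg Fin.val h
        simp only at this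
        apply Fin.ext
        omega
      · intro b hb
        simp only [Finset.mem_filter, Finset.mem_univ, true_and] at hb
        have hbn : i + (b:ℕ) < n := by have := b.2; omega
        refine ⟨⟨i + (b:ℕ), hbn⟩, ?_, ?_⟩
        · simp only [Finset.mem_filter, Finset.mem_univ, true_and]
          constructor
          · rw [hxdef]
            simp only
            rw [dif_neg (by omega : ¬ (i + (b:ℕ)) < i)]
            have : (⟨i + (b:ℕ) - i, by omega⟩ : Fin (n - i)) = b := by
              apply Fin.ext; simp
            rw [this]
            exact hb
          · omega
        · apply Fin.ext; simp
    rw [hsuffix] at hsplit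
    have : ((c a + m a : ℕ) : ℝ)
        = ((Finset.univ.filter fun t : Fin n => x t = a).card : ℝ) := by
      exact_mod_cast congrArg Nat.cast hsplit
    push_cast at this
    rw [← this, hm a]
    ring


end
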